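/- Let H be a real Hilbert space, let A : H → Set H be a set-valued operator and let β ∈ (0,1). Then for every x ∈ H, J_{A^{(β)}}(x) = β • J_A(x) = {β • y | y ∈ J_A(x)}, i.e. the resolvent of the β-strengthening of A equals β times the resolvent of A. -/

import Mathlib

open Pointwise

/-- The resolventOp of a set-valued operator `A`: `J_A(x) = {y | x − y ∈ A y}`. -/
def resolventOp {H : Type*} [NormedAddCommGroup H] [InnerProductSpace ℝ H]
    (A : H → Set H) (x : H) : Set H :=
  {y | x - y ∈ A y}

/-- The `β`-strengthening of `A`: `A^{(β)}(x) = {u + ((1−β)/β) • x | u ∈ A(β⁻¹ • x)}.` -/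
def strengthening {H : Type*} [NormedAddCommGroup H] [InnerProductSpace ℝ H]
    (A : H → Set H) (β : ℝ) (x : H) : Set H :=
  {v | ∃ u ∈ A (β⁻¹ • x), v = u + ((1 - β) / β) • x}

theorem stmt4 {H : Type*} [NormedAddCommGroup H] [InnerProductSpace ℝ H] [CompleteSpace H]
    (A : H → Set H) (β : ℝ) (hβ : β ∈ Set.Ioo (0 : ℝ) 1) :
    ∀ x : H, resolventOp (strengthening A β) x = β • resolventOp A x := by
  intro x
  have hβ0 : β ≠ 0 := ne_of_gt hβ.1
  have key : ∀ y : H, x - y - ((1 - β) / β) • y = x - β⁻¹ • y := by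
    intro y
    have h : (1 : ℝ) + (1 - β) / β = β⁻¹ := by field_simp; ring
    have : y + ((1 - β) / β) • y = β⁻¹ • y := by
      rw [← h, add_smul, one_smul]
    rw [sub_sub, this]
  ext y
  constructor
  · rintro ⟨u, hu, hy⟩
    refine ⟨β⁻¹ • y, ?_, by simp [smul_smul, hβ0]⟩
    have hu' : u = x - β⁻¹ • y := by
      rw [← key y, hy]; abel
    exact Set.mem_setOf.mpr (hu' ▸ hu)
  · rintro ⟨z, hz, rfl⟩
    refine ⟨x - z, by simpa [inv_smul_smul₀ hβ0, resolventOp] using hz, ?_⟩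
    show x - β • z = (x - z) + ((1 - β) / β) • (β • z)
    rw [smul_smul, div_mul_cancel₀ _ hβ0, sub_smul, one_smul]; abel
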